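/- For every complex number z with Re(z) ≥ -log 2, one has |e^z - 1|² ≥ (2/π²)·dist(Im(z), 2πℤ)², where dist(y, 2πℤ) = min over integers m of |y - 2πm|. -/

import Mathlib

open Real

lemma one_sub_cos_ge (y : ℝ) :
    (2 / Real.pi ^ 2) * (Metric.infDist y (Set.range fun m : ℤ => 2 * Real.pi * (m : ℝ))) ^ 2
      ≤ 1 - Real.cos y := by
  have hπ := Real.pi_pos
  set m : ℤ := round (y / (2 * π)) with hm
  set t : ℝ := y - 2 * π * m with ht
  have habs : |t| ≤ π := by
    have h := abs_sub_round (y / (2 * π))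
    rw [← hm] at h
    rw [abs_le] at h ⊢
    have h2 : 0 < 2 * π := by positivity
    have hy : y = 2 * π * (y / (2 * π)) := by field_simp
    constructor
    · have := mul_le_mul_of_nonneg_left h.1 h2.le
      rw [ht]; nlinarith
    · have := mul_le_mul_of_nonneg_left h.2 h2.le
      rw [ht]; nlinarith
  have hcos : Real.cos y = Real.cos t := by
    have : y = t + m * (2 * π) := by rw [ht]; ring
    rw [this, Real.cos_add_int_mul_two_pi]
  have hd : Metric.infDist y (Set.range fun m : ℤ => 2 * Real.pi * (m : ℝ)) ≤ |t| := by
    have : (2 * Real.pi * (m : ℝ)) ∈ Set.range fun m : ℤ => 2 * Real.pi * (m : ℝ) :=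
      ⟨m, rfl⟩
    calc Metric.infDist y _ ≤ dist y (2 * Real.pi * (m : ℝ)) := Metric.infDist_le_dist_of_mem this
      _ = |t| := by rw [Real.dist_eq, ht]
  have hd0 : 0 ≤ Metric.infDist y (Set.range fun m : ℤ => 2 * Real.pi * (m : ℝ)) :=
    Metric.infDist_nonneg
  have hsin : |t| / π ≤ Real.sin (|t| / 2) := by
    have := Real.mul_le_sin (x := |t| / 2) (by positivity) (by linarith)
    calc |t| / π = 2 / π * (|t| / 2) := by field_simp
      _ ≤ _ := this
  have hsq : Real.sin (t / 2) ^ 2 = Real.sin (|t| / 2) ^ 2 := by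
    rcases abs_cases t with ⟨h, _⟩ | ⟨h, _⟩
    · rw [h]
    · rw [h]; rw [show -t / 2 = -(t/2) by ring, Real.sin_neg]; ring
  have h1 : 1 - Real.cos t = 2 * Real.sin (t / 2) ^ 2 := by
    have := Real.sin_sq_eq_half_sub (t / 2)
    rw [show 2 * (t / 2) = t by ring] at this
    linarith
  have habs0 : 0 ≤ |t| := abs_nonneg t
  rw [hcos, h1, hsq]
  have key : 2 / π ^ 2 * |t| ^ 2 ≤ 2 * Real.sin (|t| / 2) ^ 2 := by
    have h2 : (|t| / π) ^ 2 ≤ Real.sin (|t| / 2) ^ 2 := by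
      apply sq_le_sq' _ hsin
      have hsn : 0 ≤ Real.sin (|t| / 2) :=
        Real.sin_nonneg_of_nonneg_of_le_pi (by positivity) (by linarith)
      have : 0 ≤ |t| / π := by positivity
      linarith
    rw [div_pow] at h2
    rw [show 2 / π ^ 2 * |t| ^ 2 = 2 * (|t| ^ 2 / π ^ 2) by ring]
    linarith
  calc 2 / π ^ 2 * Metric.infDist y (Set.range fun m : ℤ => 2 * Real.pi * (m : ℝ)) ^ 2
      ≤ 2 / π ^ 2 * |t| ^ 2 := by
        apply mul_le_mul_of_nonneg_left _ (by positivity)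
        exact pow_le_pow_left₀ hd0 hd 2
    _ ≤ _ := key

theorem stmt_17 (z : ℂ) (hz : z.re ≥ -Real.log 2) :
    (2 / Real.pi ^ 2) * (Metric.infDist z.im (Set.range fun m : ℤ => 2 * Real.pi * (m : ℝ))) ^ 2
      ≤ ‖Complex.exp z - 1‖ ^ 2 := by
  have hπ := Real.pi_pos
  set x := z.re
  set y := z.im
  have ha : (2:ℝ)⁻¹ ≤ Real.exp x := by
    have : Real.exp (-Real.log 2) ≤ Real.exp x := Real.exp_le_exp.2 hz
    rwa [Real.exp_neg, Real.exp_log (by norm_num : (0:ℝ) < 2)] at this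
  have hnorm : ‖Complex.exp z - 1‖ ^ 2
      = Real.exp x ^ 2 - 2 * Real.exp x * Real.cos y + 1 := by
    rw [← Complex.normSq_eq_norm_sq, Complex.normSq_apply]
    simp [Complex.exp_re, Complex.exp_im, Complex.sub_re, Complex.sub_im]
    have := Real.sin_sq_add_cos_sq y
    ring_nf
    nlinarith [Real.sin_sq_add_cos_sq y, Real.exp_pos x]
  have h1 : 1 - Real.cos y ≤ ‖Complex.exp z - 1‖ ^ 2 := by
    rw [hnorm]
    nlinarith [sq_nonneg (Real.exp x - 1),
      mul_nonneg (sub_nonneg.2 (Real.cos_le_one y)) (by linarith : (0:ℝ) ≤ 2 * Real.exp x - 1)]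
  exact (one_sub_cos_ge y).trans h1
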